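/- Let C be a class of groups that is closed under isomorphism, under taking subgroups, under taking quotients, and under finite (binary) products. Let G be a group such that for every element g ∈ G of infinite order the centraliser of g in G lies in C. If G is generated by two elementwise-commuting subgroups H₁ and H₂ (i.e., h₁h₂ = h₂h₁ for all h₁ ∈ H₁, h₂ ∈ H₂), each of which contains an element of infinite order, then G lies in C. -/

import Mathlib

/-- If `C` is a class of groups closed under isomorphism, subgroups,
quotients, and binary products, and `G` is a group whose centralisers of
infinite-order elements lie in `C`, and `G` is generated by two
elementwise-commuting subgroups `H₁`, `H₂`, each containing an element of
infinite order, then `G` lies in `C`. -/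
theorem mem_class_of_generated_by_commuting_large_subgroups
    (C : (G : Type u) → [inst : Group G] → Prop)
    (hiso : ∀ (G H : Type u) [Group G] [Group H], (G ≃* H) → C G → C H)
    (hsub : ∀ (G : Type u) [Group G] (H : Subgroup G), C G → C H)
    (hquot : ∀ (G : Type u) [Group G] (N : Subgroup G) [N.Normal], C G → C (G ⧸ N))
    (hprod : ∀ (G H : Type u) [Group G] [Group H], C G → C H → C (G × H))
    {G : Type u} [Group G]
    (hcent : ∀ g : G, ¬ IsOfFinOrder g → C (Subgroup.centralizer {g}))
    (H₁ H₂ : Subgroup G)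
    (hgen : H₁ ⊔ H₂ = ⊤)
    (hcomm : ∀ h₁ ∈ H₁, ∀ h₂ ∈ H₂, h₁ * h₂ = h₂ * h₁)
    (h1 : ∃ h ∈ H₁, ¬ IsOfFinOrder h)
    (h2 : ∃ h ∈ H₂, ¬ IsOfFinOrder h) :
    C G := by
  obtain ⟨a, haH, hao⟩ := h1
  obtain ⟨b, hbH, hbo⟩ := h2
  -- H₁ ≤ centralizer {b}
  have hle1 : H₁ ≤ Subgroup.centralizer {b} := by
    intro x hx
    rw [Subgroup.mem_centralizer_iff]
    intro y hy
    rw [Set.mem_singleton_iff] at hy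
    subst hy
    exact (hcomm x hx y hbH).symm
  have hle2 : H₂ ≤ Subgroup.centralizer {a} := by
    intro x hx
    rw [Subgroup.mem_centralizer_iff]
    intro y hy
    rw [Set.mem_singleton_iff] at hy
    subst hy
    exact hcomm y haH x hx
  have hC1 : C H₁ :=
    hiso _ _ (Subgroup.subgroupOfEquivOfLe hle1)
      (hsub _ (H₁.subgroupOf (Subgroup.centralizer {b})) (hcent b hbo))
  have hC2 : C H₂ :=
    hiso _ _ (Subgroup.subgroupOfEquivOfLe hle2)
      (hsub _ (H₂.subgroupOf (Subgroup.centralizer {a})) (hcent a hao))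
  -- multiplication hom H₁ × H₂ →* G
  let f : H₁ × H₂ →* G :=
    MonoidHom.noncommCoprod H₁.subtype H₂.subtype
      (fun m n => hcomm m m.2 n n.2)
  have hfsurj : Function.Surjective f := by
    rw [← MonoidHom.range_eq_top, eq_top_iff, ← hgen, sup_le_iff]
    constructor
    · intro x hx
      exact ⟨(⟨x, hx⟩, 1), mul_one x⟩
    · intro x hx
      exact ⟨(1, ⟨x, hx⟩), one_mul x⟩
  have hCprod : C (H₁ × H₂) := hprod _ _ hC1 hC2
  exact hiso _ _ (QuotientGroup.quotientKerEquivOfSurjective f hfsurj)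
    (hquot _ f.ker hCprod)
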